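/- Let n ∈ ℕ, let X, Y be Hausdorff topological spaces, and let f : X → Y be a continuous π_n-injective map. Then f maps every π_n-wild point of X to a π_n-wild point of Y, i.e. f(w_n(X)) ⊆ w_n(Y). -/

import Mathlib

open Filter Topology

/-- The unit `n`-sphere in `ℝ^(n+1)`. -/
abbrev Sph (n : ℕ) : Type :=
  Metric.sphere (0 : EuclideanSpace ℝ (Fin (n + 1))) 1

/-- The basepoint `s₀ = (1,0,…,0)` of the unit `n`-sphere. -/
noncomputable def spherePt (n : ℕ) : Sph n :=
  ⟨EuclideanSpace.single 0 1, by
    simp [mem_sphere_zero_iff_norm, EuclideanSpace.norm_single]⟩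

/-- A continuous map `S^n → X` is essential if it is not homotopic to a constant map. -/
def Essential {n : ℕ} {X : Type*} [TopologicalSpace X] (f : C(Sph n, X)) : Prop :=
  ∀ x : X, ¬ f.Homotopic (ContinuousMap.const (Sph n) x)

/-- `x` is a `π_n`-wild point of `X` if there is a sequence of essential maps
`S^n → X` based at `x` converging to the constant map at `x` in the compact-open
topology. -/
def IsWildPoint (n : ℕ) {X : Type*} [TopologicalSpace X] (x : X) : Prop :=
  ∃ f : ℕ → C(Sph n, X),
    (∀ k, f k (spherePt n) = x) ∧
    (∀ k, Essential (f k)) ∧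
    Tendsto f atTop (𝓝 (ContinuousMap.const (Sph n) x))

/-- The `π_n`-wild set of `X`. -/
def wildSet (n : ℕ) (X : Type*) [TopologicalSpace X] : Set X :=
  {x | IsWildPoint n x}

/-- A continuous map is `π_n`-injective if precomposition reflects inessentiality. -/
def PiNInjective (n : ℕ) {X Y : Type*} [TopologicalSpace X] [TopologicalSpace Y]
    (f : C(X, Y)) : Prop :=
  ∀ g : C(Sph n, X),
    (∃ y : Y, (f.comp g).Homotopic (ContinuousMap.const (Sph n) y)) →
    ∃ x : X, g.Homotopic (ContinuousMap.const (Sph n) x)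

/-- `X` is `π_n`-rigid at `x`. -/
def IsRigidAt (n : ℕ) {X : Type*} [TopologicalSpace X] (x : X) : Prop :=
  ∃ f : ℕ → C(Sph n, X),
    (∀ k, f k (spherePt n) = x) ∧
    (∀ k, Essential (f k)) ∧
    Tendsto f atTop (𝓝 (ContinuousMap.const (Sph n) x)) ∧
    ∀ β : C(unitInterval, X), β 0 = x →
      ∀ H : ℕ → C(Sph n × unitInterval, X),
        (∀ k s, H k (s, 0) = f k s) →
        (∀ k t, H k (spherePt n, t) = β t) →
        Tendsto H atTop (𝓝 (β.comp (ContinuousMap.snd (α := Sph n)))) →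
        β 1 = x

/-- a `π_n`-injective map sends `π_n`-wild points to `π_n`-wild points. -/
theorem stmt1 {X Y : Type*} [TopologicalSpace X] [TopologicalSpace Y]
    [T2Space X] [T2Space Y] (n : ℕ) (f : C(X, Y)) (hf : PiNInjective n f) :
    (∀ x : X, IsWildPoint n x → IsWildPoint n (f x)) ∧
    ⇑f '' wildSet n X ⊆ wildSet n Y := by
  have main : ∀ x : X, IsWildPoint n x → IsWildPoint n (f x) := by
    intro x hx
    obtain ⟨g, hbase, hess, htend⟩ := hx
    refine ⟨fun k => f.comp (g k), fun k => by simp [hbase k], ?_, ?_⟩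
    · intro k y hy
      obtain ⟨x', hx'⟩ := hf (g k) ⟨y, hy⟩
      exact hess k x' hx'
    · have hc : Continuous fun h : C(Sph n, X) => f.comp h :=
        ContinuousMap.continuous_postcomp f
      have := (hc.tendsto _).comp htend
      simpa [Function.comp_def] using this
  exact ⟨main, by rintro y ⟨x, hx, rfl⟩; exact main x hx⟩
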